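/- Let X be a finite nonempty set, let q ∈ (0,1) ∪ (1,∞), let p be a probability distribution on X, and let r be a strictly positive probability distribution on X. Then ∑_{x∈X} p(x) · ln_q(r(x)) ≤ ((∑_{x∈X} p(x)^{1/q})^q − 1)/(1 − q). -/

import Mathlib

open Real BigOperators Finset

/-- Generalized Gibbs inequality (upper bound): for a probability distribution `p`
and a strictly positive probability distribution `r` on a finite nonempty set `X`,
and `q ∈ (0,1) ∪ (1,∞)`,
`∑ x, p x * ln_q (r x) ≤ ((∑ x, p x ^ (1/q)) ^ q − 1)/(1 − q)`. -/
theorem generalized_gibbs_inequality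
    {X : Type*} [Fintype X] [Nonempty X]
    (q : ℝ) (hq0 : 0 < q) (hq1 : q ≠ 1)
    (p : X → ℝ) (hp : ∀ x, 0 ≤ p x) (hp1 : (∑ x, p x) = 1)
    (r : X → ℝ) (hr : ∀ x, 0 < r x) (hr1 : (∑ x, r x) = 1) :
    (∑ x, p x * ((r x ^ (1 - q) - 1) / (1 - q)))
      ≤ ((∑ x, p x ^ (1 / q)) ^ q - 1) / (1 - q) := by
  have key : ∑ x, p x * ((r x ^ (1 - q) - 1) / (1 - q))
      = ((∑ x, p x * r x ^ (1 - q)) - (∑ x, p x)) / (1 - q) := by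
    rw [← Finset.sum_sub_distrib, Finset.sum_div]
    apply Finset.sum_congr rfl
    intro x _
    ring
  rw [key, hp1]
  rcases lt_or_gt_of_ne hq1 with hlt | hgt
  · -- q < 1 : need ∑ p r^{1-q} ≤ (∑ p^{1/q})^q
    have h1q : 0 < 1 - q := by linarith
    have hconj : Real.HolderConjugate (1/q) (1/(1-q)) := by
      rw [Real.holderConjugate_iff]; constructor
      · rw [lt_div_iff₀ hq0]; linarith
      · field_simp; ring
    have H := Real.inner_le_Lp_mul_Lq_of_nonneg Finset.univ hconj
      (f := p) (g := fun x => r x ^ (1 - q))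
      (fun i _ => hp i) (fun i _ => (Real.rpow_nonneg (hr i).le _))
    simp only [one_div_one_div] at H
    have e1 : ∀ x : X, (r x ^ (1 - q)) ^ ((1:ℝ)/(1-q)) = r x := by
      intro x
      rw [← Real.rpow_mul (hr x).le, mul_one_div, div_self (ne_of_gt h1q), Real.rpow_one]
    simp only [e1, hr1, Real.one_rpow, mul_one] at H
    rw [div_le_div_iff_of_pos_right h1q]
    linarith
  · -- q > 1 : need (∑ p^{1/q})^q ≤ ∑ p r^{1-q}
    have h1q : 1 - q < 0 := by linarith
    have hconj : Real.HolderConjugate q (q/(q-1)) := by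
      rw [Real.holderConjugate_iff]; constructor
      · exact hgt
      · field_simp; ring
    have H := Real.inner_le_Lp_mul_Lq_of_nonneg Finset.univ hconj
      (f := fun x => (p x * r x ^ (1 - q)) ^ (1/q))
      (g := fun x => r x ^ ((q-1)/q))
      (fun i _ => Real.rpow_nonneg (mul_nonneg (hp i) (Real.rpow_nonneg (hr i).le _)) _)
      (fun i _ => Real.rpow_nonneg (hr i).le _)
    have e1 : ∀ x : X, (p x * r x ^ (1 - q)) ^ ((1:ℝ)/q) * r x ^ ((q-1)/q) = p x ^ ((1:ℝ)/q) := by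
      intro x
      rw [Real.mul_rpow (hp x) (Real.rpow_nonneg (hr x).le _),
        ← Real.rpow_mul (hr x).le, mul_assoc, ← Real.rpow_add (hr x)]
      have : (1 - q) * (1 / q) + (q - 1) / q = 0 := by field_simp; ring
      rw [this, Real.rpow_zero, mul_one]
    have e2 : ∀ x : X, ((p x * r x ^ (1 - q)) ^ ((1:ℝ)/q)) ^ q = p x * r x ^ (1 - q) := by
      intro x
      rw [← Real.rpow_mul (mul_nonneg (hp x) (Real.rpow_nonneg (hr x).le _)),
        one_div_mul_cancel (ne_of_gt hq0), Real.rpow_one]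
    have e3 : ∀ x : X, (r x ^ ((q-1)/q)) ^ (q/(q-1)) = r x := by
      intro x
      rw [← Real.rpow_mul (hr x).le, div_mul_div_comm, mul_comm,
        div_self (ne_of_gt (by nlinarith : (0:ℝ) < q * (q-1))), Real.rpow_one]
    simp only [e1, e2, e3, hr1, Real.one_rpow, mul_one] at H
    -- H : ∑ p^{1/q} ≤ (∑ p r^{1-q})^{1/q}
    have hS : 0 ≤ ∑ x, p x * r x ^ (1 - q) :=
      Finset.sum_nonneg fun x _ => mul_nonneg (hp x) (Real.rpow_nonneg (hr x).le _)
    have hL : 0 ≤ ∑ x, p x ^ ((1:ℝ)/q) :=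
      Finset.sum_nonneg fun x _ => Real.rpow_nonneg (hp x) _
    have H2 : (∑ x, p x ^ ((1:ℝ)/q)) ^ q ≤ ∑ x, p x * r x ^ (1 - q) := by
      calc (∑ x, p x ^ ((1:ℝ)/q)) ^ q ≤ ((∑ x, p x * r x ^ (1 - q)) ^ ((1:ℝ)/q)) ^ q :=
            Real.rpow_le_rpow hL H (le_of_lt hq0)
        _ = ∑ x, p x * r x ^ (1 - q) := by
            rw [← Real.rpow_mul hS, one_div_mul_cancel (ne_of_gt hq0), Real.rpow_one]
    rw [div_le_div_right_of_neg h1q]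
    linarith
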